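/- arXiv:2411.14221 — 3 statements merged into one kernel-verified Lean document; each statement's English description precedes it below -/
import Mathlib

section
/- Let F(x) = ∑_{n≥1} f(n) e^{2πi λ_n x} with f(n) ≥ 0, ∑ f(n) < ∞. For any integer M ≥ 1, any set 𝓜 ⊆ ℕ of cardinality M, and any reals X, Y with 2^M X > Y ≥ 1: max_{x ∈ [Y, 2^M X]} Re(F(x)) ≥ (1/4) ∑_{m ∈ 𝓜} f(m) + O(Y(M + log X)/X · ∑_{n≥1} f(n)), with an absolute implied constant. -/
set_option autoImplicit false
set_option maxHeartbeats 1000000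

open Real Finset

noncomputable section ResonanceAux

/-- `ec t = e^{2π i t}`. -/
def ec (t : ℝ) : ℂ := Complex.exp ((2 * π * t : ℝ) * Complex.I)

lemma ec_add (s t : ℝ) : ec (s + t) = ec s * ec t := by
  rw [ec, ec, ec, ← Complex.exp_add]; congr 1; push_cast; ring

lemma ec_conj (t : ℝ) : (starRingEnd ℂ) (ec t) = ec (-t) := by
  rw [ec, ec, ← Complex.exp_conj]; congr 1
  rw [map_mul, Complex.conj_I, Complex.conj_ofReal]; push_cast; ring

lemma ec_norm (t : ℝ) : ‖ec t‖ = 1 := Complex.norm_exp_ofReal_mul_I _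

lemma ec_zero : ec 0 = 1 := by simp [ec]

lemma ec_sub (s t : ℝ) : ec (s - t) = ec s * (starRingEnd ℂ) (ec t) := by
  rw [ec_conj, ← ec_add]; ring_nf

def sig (lam : ℕ → ℝ) (S : Finset ℕ) : ℝ := ∑ m ∈ S, lam m

def Rr (lam : ℕ → ℝ) (𝓜 : Finset ℕ) (x : ℝ) : ℂ := ∏ m ∈ 𝓜, (ec (lam m * x) + 1)

def Aa (lam : ℕ → ℝ) (𝓜 : Finset ℕ) (x : ℝ) : ℝ := Complex.normSq (Rr lam 𝓜 x)

def Zz (h : ℝ) (N : ℕ) (β : ℝ) : ℂ := ∑ j ∈ Finset.range N, ec (β * (j * h))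

def Kk (h : ℝ) (N : ℕ) (β : ℝ) : ℝ := Complex.normSq (Zz h N β)

lemma Rr_eq (lam : ℕ → ℝ) (𝓜 : Finset ℕ) (x : ℝ) :
    Rr lam 𝓜 x = ∑ S ∈ 𝓜.powerset, ec (sig lam S * x) := by
  rw [Rr]
  rw [show (∏ m ∈ 𝓜, (ec (lam m * x) + 1)) = ∏ m ∈ 𝓜, (ec (lam m * x) + (fun _ => (1:ℂ)) m)
    from rfl, Finset.prod_add]
  refine Finset.sum_congr rfl fun S hS => ?_
  rw [Finset.prod_const_one, mul_one]
  rw [show (∏ i ∈ S, ec (lam i * x)) = ∏ i ∈ S, Complex.exp ((2 * π * (lam i * x) : ℝ) * Complex.I)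
    from rfl, ← Complex.exp_sum, ec]
  congr 1
  rw [sig]
  push_cast
  rw [Finset.sum_mul, Finset.mul_sum, Finset.sum_mul]

lemma Aa_nonneg (lam : ℕ → ℝ) (𝓜 : Finset ℕ) (x : ℝ) : 0 ≤ Aa lam 𝓜 x :=
  Complex.normSq_nonneg _

lemma Aa_le (lam : ℕ → ℝ) (𝓜 : Finset ℕ) (x : ℝ) : Aa lam 𝓜 x ≤ 4 ^ 𝓜.card := by
  have h1 : ‖Rr lam 𝓜 x‖ ≤ 2 ^ 𝓜.card := by
    calc ‖Rr lam 𝓜 x‖ ≤ ∏ m ∈ 𝓜, ‖ec (lam m * x) + 1‖ := norm_prod_le _ _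
    _ ≤ ∏ m ∈ 𝓜, (2:ℝ) := by
        refine Finset.prod_le_prod (fun m _ => norm_nonneg _) (fun m _ => ?_)
        calc ‖ec (lam m * x) + 1‖ ≤ ‖ec (lam m * x)‖ + ‖(1:ℂ)‖ := norm_add_le _ _
        _ = 2 := by rw [ec_norm, norm_one]; norm_num
    _ = 2 ^ 𝓜.card := by rw [Finset.prod_const]
  have h2 : Aa lam 𝓜 x = ‖Rr lam 𝓜 x‖ ^ 2 := by
    rw [Aa, Complex.normSq_eq_norm_sq]
  rw [h2]
  calc ‖Rr lam 𝓜 x‖ ^ 2 ≤ (2 ^ 𝓜.card : ℝ) ^ 2 := by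
        exact pow_le_pow_left₀ (norm_nonneg _) h1 2
  _ = 4 ^ 𝓜.card := by rw [← pow_mul, pow_mul']; norm_num

lemma Kk_nonneg (h : ℝ) (N : ℕ) (β : ℝ) : 0 ≤ Kk h N β := Complex.normSq_nonneg _

lemma Kk_le (h : ℝ) (N : ℕ) (β : ℝ) : Kk h N β ≤ (N:ℝ)^2 := by
  have h1 : ‖Zz h N β‖ ≤ (N:ℝ) := by
    calc ‖Zz h N β‖ ≤ ∑ j ∈ Finset.range N, ‖ec (β * (j * h))‖ := norm_sum_le _ _
    _ = (N:ℝ) := by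
        simp only [show ∀ t, ‖ec t‖ = 1 from ec_norm]
        simp
  have h2 : Kk h N β = ‖Zz h N β‖ ^ 2 := by rw [Kk, Complex.normSq_eq_norm_sq]
  rw [h2]
  exact pow_le_pow_left₀ (norm_nonneg _) h1 2

lemma Zz_neg (h : ℝ) (N : ℕ) (β : ℝ) : Zz h N (-β) = (starRingEnd ℂ) (Zz h N β) := by
  rw [Zz, Zz, map_sum]
  refine Finset.sum_congr rfl fun j _ => ?_
  rw [ec_conj]; ring_nf

lemma Kk_even (h : ℝ) (N : ℕ) (β : ℝ) : Kk h N (-β) = Kk h N β := by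
  rw [Kk, Kk, Zz_neg, Complex.normSq_conj]

lemma Kk_zero (h : ℝ) (N : ℕ) : Kk h N 0 = (N:ℝ)^2 := by
  rw [Kk, Zz]
  simp only [zero_mul, ec_zero, Finset.sum_const, Finset.card_range, nsmul_eq_mul, mul_one]
  rw [Complex.normSq_natCast]
  ring

lemma lemA (h : ℝ) (N : ℕ) (γ : ℝ) :
    ∑ j ∈ Finset.range N, ∑ k ∈ Finset.range N, ec (γ * (((j:ℝ) - k) * h))
      = ((Kk h N γ : ℝ) : ℂ) := by
  have key : ∀ j k : ℕ, ec (γ * (((j:ℝ) - k) * h))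
      = ec (γ * (j * h)) * (starRingEnd ℂ) (ec (γ * (k * h))) := by
    intro j k
    rw [← ec_sub]
    congr 1; ring
  calc ∑ j ∈ Finset.range N, ∑ k ∈ Finset.range N, ec (γ * (((j:ℝ) - k) * h))
      = ∑ j ∈ Finset.range N, ∑ k ∈ Finset.range N,
          ec (γ * (j * h)) * (starRingEnd ℂ) (ec (γ * (k * h))) := by
        exact Finset.sum_congr rfl fun j _ => Finset.sum_congr rfl fun k _ => key j k
  _ = (Zz h N γ) * (starRingEnd ℂ) (Zz h N γ) := by
        rw [Zz, map_sum, Finset.sum_mul_sum]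
  _ = ((Kk h N γ : ℝ) : ℂ) := by rw [Complex.mul_conj, Kk]

lemma Ww_eq (lam : ℕ → ℝ) (𝓜 : Finset ℕ) (x : ℝ) :
    Rr lam 𝓜 x * (starRingEnd ℂ) (Rr lam 𝓜 x)
      = ∑ S ∈ 𝓜.powerset, ∑ S' ∈ 𝓜.powerset, ec ((sig lam S - sig lam S') * x) := by
  rw [Rr_eq, map_sum, Finset.sum_mul_sum]
  refine Finset.sum_congr rfl fun S _ => Finset.sum_congr rfl fun S' _ => ?_
  rw [ec_conj, ← ec_add]
  congr 1; ring

lemma lemB (lam : ℕ → ℝ) (𝓜 : Finset ℕ) (h : ℝ) (N : ℕ) (lamv : ℝ) :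
    ∑ j ∈ Finset.range N, ∑ k ∈ Finset.range N,
      (ec (lamv * (((j:ℝ) - k) * h)) *
        (Rr lam 𝓜 (((j:ℝ) - k) * h) * (starRingEnd ℂ) (Rr lam 𝓜 (((j:ℝ) - k) * h))))
      = ((∑ S ∈ 𝓜.powerset, ∑ S' ∈ 𝓜.powerset,
          Kk h N (lamv + sig lam S - sig lam S') : ℝ) : ℂ) := by
  have step1 : ∀ x : ℝ, ec (lamv * x) * (Rr lam 𝓜 x * (starRingEnd ℂ) (Rr lam 𝓜 x))
      = ∑ S ∈ 𝓜.powerset, ∑ S' ∈ 𝓜.powerset, ec ((lamv + sig lam S - sig lam S') * x) := by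
    intro x
    rw [Ww_eq, Finset.mul_sum]
    refine Finset.sum_congr rfl fun S _ => ?_
    rw [Finset.mul_sum]
    refine Finset.sum_congr rfl fun S' _ => ?_
    rw [← ec_add]
    congr 1; ring
  calc ∑ j ∈ Finset.range N, ∑ k ∈ Finset.range N,
      (ec (lamv * (((j:ℝ) - k) * h)) *
        (Rr lam 𝓜 (((j:ℝ) - k) * h) * (starRingEnd ℂ) (Rr lam 𝓜 (((j:ℝ) - k) * h))))
      = ∑ j ∈ Finset.range N, ∑ k ∈ Finset.range N, ∑ S ∈ 𝓜.powerset, ∑ S' ∈ 𝓜.powerset,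
          ec ((lamv + sig lam S - sig lam S') * (((j:ℝ) - k) * h)) := by
        exact Finset.sum_congr rfl fun j _ => Finset.sum_congr rfl fun k _ => step1 _
  _ = ∑ S ∈ 𝓜.powerset, ∑ S' ∈ 𝓜.powerset, ∑ j ∈ Finset.range N, ∑ k ∈ Finset.range N,
          ec ((lamv + sig lam S - sig lam S') * (((j:ℝ) - k) * h)) := by
        rw [show (∑ j ∈ Finset.range N, ∑ k ∈ Finset.range N, ∑ S ∈ 𝓜.powerset, ∑ S' ∈ 𝓜.powerset,
          ec ((lamv + sig lam S - sig lam S') * (((j:ℝ) - k) * h)))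
          = ∑ j ∈ Finset.range N, ∑ S ∈ 𝓜.powerset, ∑ S' ∈ 𝓜.powerset, ∑ k ∈ Finset.range N,
          ec ((lamv + sig lam S - sig lam S') * (((j:ℝ) - k) * h)) from
          Finset.sum_congr rfl fun j _ => by
            rw [Finset.sum_comm]
            exact Finset.sum_congr rfl fun S _ => Finset.sum_comm]
        rw [Finset.sum_comm]
        exact Finset.sum_congr rfl fun S _ => Finset.sum_comm
  _ = ((∑ S ∈ 𝓜.powerset, ∑ S' ∈ 𝓜.powerset,
          Kk h N (lamv + sig lam S - sig lam S') : ℝ) : ℂ) := by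
        push_cast
        refine Finset.sum_congr rfl fun S _ => Finset.sum_congr rfl fun S' _ => ?_
        rw [← lemA h N (lamv + sig lam S - sig lam S')]

lemma lemComb (lam : ℕ → ℝ) (𝓜 : Finset ℕ) (h : ℝ) (N : ℕ) (m : ℕ) (hm : m ∈ 𝓜) :
    ∑ S ∈ 𝓜.powerset, ∑ S' ∈ 𝓜.powerset, Kk h N (sig lam S - sig lam S')
      ≤ 2 * ∑ S ∈ 𝓜.powerset, ∑ S' ∈ 𝓜.powerset, Kk h N (lam m + sig lam S - sig lam S') := by
  classical
  set P := 𝓜.powerset with hP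
  have hins : ∀ S : Finset ℕ, m ∉ S → sig lam (insert m S) = lam m + sig lam S := by
    intro S hmS
    rw [sig, sig, Finset.sum_insert hmS]
  have herase : ∀ S : Finset ℕ, m ∈ S → sig lam S = lam m + sig lam (S.erase m) := by
    intro S hmS
    rw [sig, sig, ← Finset.sum_erase_add S lam hmS]; ring
  have hsplit : ∀ S ∈ P, ∑ S' ∈ P, Kk h N (sig lam S - sig lam S')
      = (∑ S' ∈ P.filter (fun T => m ∉ T), Kk h N (sig lam S - sig lam S'))
        + ∑ S' ∈ P.filter (fun T => m ∈ T), Kk h N (sig lam S - sig lam S') := by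
    intro S _
    rw [← Finset.sum_filter_add_sum_filter_not P (fun T => m ∉ T)]
    simp only [not_not]
  have part1 : ∀ S ∈ P, (∑ S' ∈ P.filter (fun T => m ∉ T), Kk h N (sig lam S - sig lam S'))
      ≤ ∑ S' ∈ P, Kk h N (lam m + sig lam S - sig lam S') := by
    intro S _
    have heq : (∑ S' ∈ P.filter (fun T => m ∉ T), Kk h N (sig lam S - sig lam S'))
        = ∑ S' ∈ P.filter (fun T => m ∈ T), Kk h N (lam m + sig lam S - sig lam S') := by
      refine Finset.sum_bij' (fun T _ => insert m T) (fun T _ => T.erase m) ?_ ?_ ?_ ?_ ?_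
      · intro T hT
        rw [Finset.mem_filter] at hT ⊢
        exact ⟨Finset.mem_powerset.2 (Finset.insert_subset hm
          (Finset.mem_powerset.1 hT.1)), Finset.mem_insert_self _ _⟩
      · intro T hT
        rw [Finset.mem_filter] at hT ⊢
        exact ⟨Finset.mem_powerset.2 ((Finset.erase_subset _ _).trans
          (Finset.mem_powerset.1 hT.1)), Finset.notMem_erase _ _⟩
      · intro T hT
        rw [Finset.mem_filter] at hT
        exact Finset.erase_insert hT.2
      · intro T hT
        rw [Finset.mem_filter] at hT
        exact Finset.insert_erase hT.2
      · intro T hT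
        rw [Finset.mem_filter] at hT
        rw [hins T hT.2]
        congr 1; ring
    rw [heq]
    exact Finset.sum_le_sum_of_subset_of_nonneg (Finset.filter_subset _ _)
      (fun _ _ _ => Kk_nonneg _ _ _)
  have part2 : (∑ S ∈ P, ∑ S' ∈ P.filter (fun T => m ∈ T), Kk h N (sig lam S - sig lam S'))
      ≤ ∑ S ∈ P, ∑ S' ∈ P, Kk h N (lam m + sig lam S - sig lam S') := by
    rw [Finset.sum_comm]
    have heq : (∑ S' ∈ P.filter (fun T => m ∈ T), ∑ S ∈ P, Kk h N (sig lam S - sig lam S'))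
        = ∑ A ∈ P.filter (fun T => m ∉ T), ∑ S ∈ P, Kk h N (lam m + sig lam A - sig lam S) := by
      refine Finset.sum_bij' (fun T _ => T.erase m) (fun T _ => insert m T) ?_ ?_ ?_ ?_ ?_
      · intro T hT
        rw [Finset.mem_filter] at hT ⊢
        exact ⟨Finset.mem_powerset.2 ((Finset.erase_subset _ _).trans
          (Finset.mem_powerset.1 hT.1)), Finset.notMem_erase _ _⟩
      · intro T hT
        rw [Finset.mem_filter] at hT ⊢
        exact ⟨Finset.mem_powerset.2 (Finset.insert_subset hm
          (Finset.mem_powerset.1 hT.1)), Finset.mem_insert_self _ _⟩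
      · intro T hT
        rw [Finset.mem_filter] at hT
        exact Finset.insert_erase hT.2
      · intro T hT
        rw [Finset.mem_filter] at hT
        exact Finset.erase_insert hT.2
      · intro T hT
        rw [Finset.mem_filter] at hT
        refine Finset.sum_congr rfl fun S _ => ?_
        rw [← Kk_even h N (sig lam S - sig lam T), herase T hT.2]
        congr 1; ring
    rw [heq]
    refine (Finset.sum_le_sum_of_subset_of_nonneg (Finset.filter_subset _ _) ?_).trans ?_
    · intro _ _ _
      exact Finset.sum_nonneg fun _ _ => Kk_nonneg _ _ _
    · refine Finset.sum_le_sum fun A _ => Finset.sum_le_sum fun S _ => le_refl _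
  calc ∑ S ∈ P, ∑ S' ∈ P, Kk h N (sig lam S - sig lam S')
      = (∑ S ∈ P, ∑ S' ∈ P.filter (fun T => m ∉ T), Kk h N (sig lam S - sig lam S'))
        + ∑ S ∈ P, ∑ S' ∈ P.filter (fun T => m ∈ T), Kk h N (sig lam S - sig lam S') := by
        rw [← Finset.sum_add_distrib]
        exact Finset.sum_congr rfl hsplit
  _ ≤ (∑ S ∈ P, ∑ S' ∈ P, Kk h N (lam m + sig lam S - sig lam S'))
        + ∑ S ∈ P, ∑ S' ∈ P, Kk h N (lam m + sig lam S - sig lam S') :=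
        add_le_add (Finset.sum_le_sum part1) part2
  _ = 2 * ∑ S ∈ P, ∑ S' ∈ P, Kk h N (lam m + sig lam S - sig lam S') := by ring

/-- The resonance sum `Ksum`. -/
def Ksum (lam : ℕ → ℝ) (𝓜 : Finset ℕ) (h : ℝ) (N : ℕ) (lamv : ℝ) : ℝ :=
  ∑ S ∈ 𝓜.powerset, ∑ S' ∈ 𝓜.powerset, Kk h N (lamv + sig lam S - sig lam S')

lemma Ksum_nonneg (lam : ℕ → ℝ) (𝓜 : Finset ℕ) (h : ℝ) (N : ℕ) (lamv : ℝ) :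
    0 ≤ Ksum lam 𝓜 h N lamv :=
  Finset.sum_nonneg fun _ _ => Finset.sum_nonneg fun _ _ => Kk_nonneg _ _ _

lemma Ksum_le (lam : ℕ → ℝ) (𝓜 : Finset ℕ) (h : ℝ) (N : ℕ) (lamv : ℝ) :
    Ksum lam 𝓜 h N lamv ≤ 4 ^ 𝓜.card * (N:ℝ)^2 := by
  have : Ksum lam 𝓜 h N lamv ≤ ∑ _S ∈ 𝓜.powerset, ∑ _S' ∈ 𝓜.powerset, (N:ℝ)^2 :=
    Finset.sum_le_sum fun S _ => Finset.sum_le_sum fun S' _ => Kk_le _ _ _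
  refine this.trans ?_
  rw [Finset.sum_const, Finset.sum_const, Finset.card_powerset, nsmul_eq_mul, nsmul_eq_mul]
  rw [← mul_assoc]
  have : ((2:ℝ) ^ 𝓜.card) * (2 ^ 𝓜.card) = 4 ^ 𝓜.card := by
    rw [← mul_pow]; norm_num
  push_cast
  rw [this]


lemma summable_ecmul (f lam : ℕ → ℝ) (hf0 : ∀ n, 0 ≤ f n) (hfs : Summable f) (x : ℝ) :
    Summable (fun n => (f n : ℂ) * ec (lam n * x)) := by
  apply Summable.of_norm
  have hn : (fun n => ‖(f n : ℂ) * ec (lam n * x)‖) = f := by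
    funext n
    rw [norm_mul, ec_norm, mul_one, Complex.norm_real, Real.norm_eq_abs, abs_of_nonneg (hf0 n)]
  rw [hn]; exact hfs

lemma g_re (f lam : ℕ → ℝ) (hf0 : ∀ n, 0 ≤ f n) (hfs : Summable f) (x : ℝ) :
    (∑' n, (f n : ℂ) * ec (lam n * x)).re = ∑' n, f n * Real.cos (2 * π * (lam n * x)) := by
  rw [Complex.re_tsum (summable_ecmul f lam hf0 hfs x)]
  refine tsum_congr fun n => ?_
  rw [Complex.re_ofReal_mul, ec, Complex.exp_ofReal_mul_I_re]

lemma g_abs_le (f lam : ℕ → ℝ) (hf0 : ∀ n, 0 ≤ f n) (hfs : Summable f) (x : ℝ) :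
    |∑' n, f n * Real.cos (2 * π * (lam n * x))| ≤ ∑' n, f n := by
  rw [← g_re f lam hf0 hfs x]
  have h1 : |(∑' n, (f n : ℂ) * ec (lam n * x)).re| ≤ ‖∑' n, (f n : ℂ) * ec (lam n * x)‖ :=
    Complex.abs_re_le_norm _
  refine h1.trans ?_
  have h2 : ‖∑' n, (f n : ℂ) * ec (lam n * x)‖ ≤ ∑' n, ‖(f n : ℂ) * ec (lam n * x)‖ :=
    norm_tsum_le_tsum_norm (by
      have hn : (fun n => ‖(f n : ℂ) * ec (lam n * x)‖) = f := by
        funext n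
        rw [norm_mul, ec_norm, mul_one, Complex.norm_real, Real.norm_eq_abs,
          abs_of_nonneg (hf0 n)]
      rw [hn]; exact hfs)
  refine h2.trans (le_of_eq ?_)
  refine tsum_congr fun n => ?_
  rw [norm_mul, ec_norm, mul_one, Complex.norm_real, Real.norm_eq_abs, abs_of_nonneg (hf0 n)]

lemma summable_fKsum (f lam : ℕ → ℝ) (hf0 : ∀ n, 0 ≤ f n) (hfs : Summable f)
    (𝓜 : Finset ℕ) (h : ℝ) (N : ℕ) :
    Summable (fun n => f n * Ksum lam 𝓜 h N (lam n)) := by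
  refine Summable.of_nonneg_of_le
    (fun n => mul_nonneg (hf0 n) (Ksum_nonneg _ _ _ _ _))
    (fun n => mul_le_mul_of_nonneg_left (Ksum_le lam 𝓜 h N (lam n)) (hf0 n))
    (hfs.mul_right _)

lemma mainId (f lam : ℕ → ℝ) (hf0 : ∀ n, 0 ≤ f n) (hfs : Summable f)
    (𝓜 : Finset ℕ) (h : ℝ) (N : ℕ) :
    ∑ p ∈ Finset.range N ×ˢ Finset.range N,
        (∑' n, f n * Real.cos (2 * π * (lam n * (((p.1:ℝ) - p.2) * h))))
          * Aa lam 𝓜 (((p.1:ℝ) - p.2) * h)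
      = ∑' n, f n * Ksum lam 𝓜 h N (lam n) := by
  classical
  set x : ℕ × ℕ → ℝ := fun p => ((p.1:ℝ) - p.2) * h with hx
  set sq := Finset.range N ×ˢ Finset.range N with hsq
  -- complex version of each summand
  have hWA : ∀ y : ℝ, Rr lam 𝓜 y * (starRingEnd ℂ) (Rr lam 𝓜 y) = ((Aa lam 𝓜 y : ℝ) : ℂ) := by
    intro y; rw [Complex.mul_conj, Aa]
  have step0 : ∀ p : ℕ × ℕ,
      (∑' n, f n * Real.cos (2 * π * (lam n * x p))) * Aa lam 𝓜 (x p)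
        = ((∑' n, (f n : ℂ) * ec (lam n * x p))
            * (Rr lam 𝓜 (x p) * (starRingEnd ℂ) (Rr lam 𝓜 (x p)))).re := by
    intro p
    rw [hWA, mul_comm _ ((Aa lam 𝓜 (x p) : ℝ) : ℂ), Complex.re_ofReal_mul,
      g_re f lam hf0 hfs]
    ring
  have step1 : ∑ p ∈ sq, (∑' n, f n * Real.cos (2 * π * (lam n * x p))) * Aa lam 𝓜 (x p)
      = (∑ p ∈ sq, (∑' n, (f n : ℂ) * ec (lam n * x p))
          * (Rr lam 𝓜 (x p) * (starRingEnd ℂ) (Rr lam 𝓜 (x p)))).re := by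
    rw [Complex.re_sum]
    exact Finset.sum_congr rfl fun p _ => step0 p
  rw [step1]
  -- push the product into the tsum and swap
  have step2 : ∀ p : ℕ × ℕ,
      (∑' n, (f n : ℂ) * ec (lam n * x p))
          * (Rr lam 𝓜 (x p) * (starRingEnd ℂ) (Rr lam 𝓜 (x p)))
        = ∑' n, (f n : ℂ) * ec (lam n * x p)
            * (Rr lam 𝓜 (x p) * (starRingEnd ℂ) (Rr lam 𝓜 (x p))) :=
    fun p => tsum_mul_right.symm
  have step3 : ∑ p ∈ sq, (∑' n, (f n : ℂ) * ec (lam n * x p))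
          * (Rr lam 𝓜 (x p) * (starRingEnd ℂ) (Rr lam 𝓜 (x p)))
      = ∑' n, ∑ p ∈ sq, (f n : ℂ) * ec (lam n * x p)
          * (Rr lam 𝓜 (x p) * (starRingEnd ℂ) (Rr lam 𝓜 (x p))) := by
    rw [show (∑ p ∈ sq, (∑' n, (f n : ℂ) * ec (lam n * x p))
          * (Rr lam 𝓜 (x p) * (starRingEnd ℂ) (Rr lam 𝓜 (x p))))
        = ∑ p ∈ sq, ∑' n, (f n : ℂ) * ec (lam n * x p)
          * (Rr lam 𝓜 (x p) * (starRingEnd ℂ) (Rr lam 𝓜 (x p))) from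
      Finset.sum_congr rfl fun p _ => step2 p]
    exact (Summable.tsum_finsetSum fun p _ => (summable_ecmul f lam hf0 hfs (x p)).mul_right _).symm
  rw [step3]
  -- evaluate the inner finite sum for each n
  have step4 : ∀ n : ℕ, ∑ p ∈ sq, (f n : ℂ) * ec (lam n * x p)
          * (Rr lam 𝓜 (x p) * (starRingEnd ℂ) (Rr lam 𝓜 (x p)))
      = ((f n * Ksum lam 𝓜 h N (lam n) : ℝ) : ℂ) := by
    intro n
    have : ∑ p ∈ sq, (f n : ℂ) * ec (lam n * x p)
          * (Rr lam 𝓜 (x p) * (starRingEnd ℂ) (Rr lam 𝓜 (x p)))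
        = (f n : ℂ) * ∑ p ∈ sq, ec (lam n * x p)
          * (Rr lam 𝓜 (x p) * (starRingEnd ℂ) (Rr lam 𝓜 (x p))) := by
      rw [Finset.mul_sum]
      exact Finset.sum_congr rfl fun p _ => by ring
    rw [this, hsq, Finset.sum_product]
    rw [lemB lam 𝓜 h N (lam n)]
    rw [← Ksum]
    push_cast
    ring
  rw [show (∑' n, ∑ p ∈ sq, (f n : ℂ) * ec (lam n * x p)
          * (Rr lam 𝓜 (x p) * (starRingEnd ℂ) (Rr lam 𝓜 (x p))))
      = ∑' n, ((f n * Ksum lam 𝓜 h N (lam n) : ℝ) : ℂ) from tsum_congr step4]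
  rw [Complex.re_tsum (Complex.summable_ofReal.2 (summable_fKsum f lam hf0 hfs 𝓜 h N))]
  exact tsum_congr fun n => by rw [Complex.ofReal_re]


lemma core (f lam : ℕ → ℝ) (hf0 : ∀ n, 0 ≤ f n) (hfs : Summable f)
    (𝓜 : Finset ℕ) (Y T : ℝ) (hY : 1 ≤ Y) (hYT : Y ≤ T) (N : ℕ) (hN : 0 < N)
    (hc : 2 * Y * 2 ^ 𝓜.card / T + 2 ^ 𝓜.card / N ≤ 1 / 2) :
    (1/2) * (∑ m ∈ 𝓜, f m)
      - 2 * (2 * Y * 2 ^ 𝓜.card / T + 2 ^ 𝓜.card / N) * (∑' n, f n)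
    ≤ sSup ((fun y => ∑' n, f n * Real.cos (2 * π * (lam n * y))) '' Set.Icc Y T) := by
  classical
  have hT : 0 < T := lt_of_lt_of_le one_pos (hY.trans hYT)
  have hY0 : 0 < Y := lt_of_lt_of_le one_pos hY
  set M := 𝓜.card with hM
  set c : ℝ := 2 * Y * 2 ^ M / T + 2 ^ M / N with hcdef
  have hc0 : 0 ≤ c := by
    apply add_nonneg
    · positivity
    · positivity
  set g : ℝ → ℝ := fun y => ∑' n, f n * Real.cos (2 * π * (lam n * y)) with hg
  set Sf : ℝ := ∑' n, f n with hSf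
  have hSf0 : 0 ≤ Sf := tsum_nonneg hf0
  have hgabs : ∀ y, |g y| ≤ Sf := fun y => g_abs_le f lam hf0 hfs y
  have hgeven : ∀ y, g (-y) = g y := by
    intro y
    refine tsum_congr fun n => ?_
    rw [show 2 * π * (lam n * -y) = -(2 * π * (lam n * y)) by ring, Real.cos_neg]
  set img := g '' Set.Icc Y T with himg
  have hbdd : BddAbove img := by
    refine ⟨Sf, fun z hz => ?_⟩
    obtain ⟨y, _, rfl⟩ := hz
    exact (le_abs_self _).trans (hgabs y)
  have hne : img.Nonempty := ⟨g Y, ⟨Y, ⟨le_refl Y, hYT⟩, rfl⟩⟩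
  set s : ℝ := sSup img with hs
  -- grid
  set h : ℝ := T / N with hh
  have hh0 : 0 < h := div_pos hT (by exact_mod_cast hN)
  set x : ℕ × ℕ → ℝ := fun p => ((p.1:ℝ) - p.2) * h with hx
  set sq := Finset.range N ×ˢ Finset.range N with hsq
  set Inn := sq.filter (fun p => Y ≤ |x p|) with hInn
  set Outt := sq.filter (fun p => ¬ Y ≤ |x p|) with hOutt
  -- upper bound at in-points
  have hsup_in : ∀ p ∈ Inn, g (x p) ≤ s := by
    intro p hp
    rw [hInn, Finset.mem_filter] at hp
    obtain ⟨hpsq, hpY⟩ := hp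
    rw [hsq, Finset.mem_product, Finset.mem_range, Finset.mem_range] at hpsq
    have hxle : |x p| ≤ T := by
      have h1 : |((p.1:ℝ) - p.2)| ≤ N := by
        rw [abs_sub_le_iff]
        constructor
        · have : (p.1:ℝ) ≤ N := by exact_mod_cast (hpsq.1.le)
          have h2 : (0:ℝ) ≤ p.2 := by positivity
          linarith
        · have : (p.2:ℝ) ≤ N := by exact_mod_cast (hpsq.2.le)
          have h2 : (0:ℝ) ≤ p.1 := by positivity
          linarith
      have : |x p| = |((p.1:ℝ) - p.2)| * h := by
        rw [hx, abs_mul, abs_of_pos hh0]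
      rw [this]
      calc |((p.1:ℝ) - p.2)| * h ≤ N * h := by
            exact mul_le_mul_of_nonneg_right h1 hh0.le
      _ = T := by
            rw [hh]
            field_simp
    have hgx : g (x p) = g (|x p|) := by
      rcases le_or_gt 0 (x p) with hx0 | hx0
      · rw [abs_of_nonneg hx0]
      · rw [abs_of_neg hx0, hgeven]
    rw [hgx]
    exact le_csSup hbdd ⟨|x p|, ⟨hpY, hxle⟩, rfl⟩
  -- main quantities
  set V : ℝ := Ksum lam 𝓜 h N 0 with hV
  have hVKk : V = ∑ S ∈ 𝓜.powerset, ∑ S' ∈ 𝓜.powerset, Kk h N (sig lam S - sig lam S') := by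
    rw [hV, Ksum]
    exact Finset.sum_congr rfl fun S _ => Finset.sum_congr rfl fun S' _ => by rw [zero_add]
  have hVlow : (2:ℝ) ^ M * (N:ℝ) ^ 2 ≤ V := by
    have h1 : ∀ S ∈ 𝓜.powerset, (N:ℝ)^2 ≤ ∑ S' ∈ 𝓜.powerset, Kk h N (sig lam S - sig lam S') := by
      intro S hS
      have := Finset.single_le_sum (f := fun S' => Kk h N (sig lam S - sig lam S'))
        (fun S' _ => Kk_nonneg _ _ _) hS
      simpa [Kk_zero] using this
    calc (2:ℝ) ^ M * (N:ℝ)^2 = ∑ _S ∈ 𝓜.powerset, (N:ℝ)^2 := by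
          rw [Finset.sum_const, Finset.card_powerset, nsmul_eq_mul]
          push_cast
          ring
    _ ≤ V := by
          rw [hVKk]
          exact Finset.sum_le_sum h1
  have hV0 : 0 < V := lt_of_lt_of_le (by positivity) hVlow
  -- total sum
  set TD : ℝ := ∑ p ∈ sq, g (x p) * Aa lam 𝓜 (x p) with hTD
  have hTDeq : TD = ∑' n, f n * Ksum lam 𝓜 h N (lam n) := mainId f lam hf0 hfs 𝓜 h N
  have hTDlow : (∑ m ∈ 𝓜, f m) * (V / 2) ≤ TD := by
    rw [hTDeq]
    have h2 : ∀ m ∈ 𝓜, f m * (V / 2) ≤ f m * Ksum lam 𝓜 h N (lam m) := by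
      intro m hm
      have h3 := lemComb lam 𝓜 h N m hm
      rw [← hVKk] at h3
      have h4 : V / 2 ≤ Ksum lam 𝓜 h N (lam m) := by
        rw [Ksum]; linarith
      exact mul_le_mul_of_nonneg_left h4 (hf0 m)
    calc (∑ m ∈ 𝓜, f m) * (V / 2) = ∑ m ∈ 𝓜, f m * (V / 2) := by rw [Finset.sum_mul]
    _ ≤ ∑ m ∈ 𝓜, f m * Ksum lam 𝓜 h N (lam m) := Finset.sum_le_sum h2
    _ ≤ ∑' n, f n * Ksum lam 𝓜 h N (lam n) := by
          exact Summable.sum_le_tsum 𝓜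
            (fun n _ => mul_nonneg (hf0 n) (Ksum_nonneg _ _ _ _ _))
            (summable_fKsum f lam hf0 hfs 𝓜 h N)
  -- cardinality of Outt
  set E0 : ℝ := 4 ^ M * ((N:ℝ) * (2 * Y * N / T + 1)) with hE0def
  have hOutCard : (Outt.card : ℝ) ≤ (N:ℝ) * (2 * Y * N / T + 1) := by
    set D : ℤ := ⌊Y / h⌋ with hD
    have hD0 : 0 ≤ D := Int.floor_nonneg.2 (le_of_lt (div_pos hY0 hh0))
    have hinj : ∀ p ∈ Outt, ((p.1, (p.1:ℤ) - (p.2:ℤ)) : ℕ × ℤ)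
        ∈ Finset.range N ×ˢ Finset.Icc (-D) D := by
      intro p hp
      rw [hOutt, Finset.mem_filter] at hp
      obtain ⟨hpsq, hpY⟩ := hp
      push_neg at hpY
      rw [hsq, Finset.mem_product] at hpsq
      rw [Finset.mem_product]
      refine ⟨hpsq.1, ?_⟩
      rw [Finset.mem_Icc, ← abs_le]
      rw [Int.le_floor]
      have h1 : |x p| = |((p.1:ℝ) - p.2)| * h := by
        rw [hx, abs_mul, abs_of_pos hh0]
      have h2 : |((p.1:ℝ) - p.2)| < Y / h := by
        rw [lt_div_iff₀ hh0]
        calc |((p.1:ℝ) - p.2)| * h = |x p| := h1.symm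
        _ < Y := hpY
      push_cast
      exact h2.le
    have hcard : Outt.card ≤ (Finset.range N ×ˢ Finset.Icc (-D) D).card := by
      refine Finset.card_le_card_of_injOn (fun p => (p.1, (p.1:ℤ) - (p.2:ℤ))) hinj ?_
      intro p hp q hq hpq
      simp only [Prod.mk.injEq] at hpq
      obtain ⟨h1, h2⟩ := hpq
      have h3 : p.2 = q.2 := by omega
      exact Prod.ext h1 h3
    have hcard2 : ((Finset.range N ×ˢ Finset.Icc (-D) D).card : ℝ)
        ≤ (N:ℝ) * (2 * Y * N / T + 1) := by
      rw [Finset.card_product, Finset.card_range]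
      have h4 : (Finset.Icc (-D) D).card = (2 * D + 1).toNat := by
        rw [Int.card_Icc]
        congr 1
        omega
      rw [h4]
      have hDnn : (0:ℤ) ≤ 2 * D + 1 := by omega
      have h5 : (((2 * D + 1).toNat : ℕ) : ℝ) = 2 * (D:ℝ) + 1 := by
        have h5' := Int.toNat_of_nonneg hDnn
        have : (((2 * D + 1).toNat : ℤ) : ℝ) = ((2 * D + 1 : ℤ) : ℝ) := by rw [h5']
        push_cast at this
        push_cast
        linarith
      rw [Nat.cast_mul, h5]
      have h6 : (D:ℝ) ≤ Y / h := Int.floor_le _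
      have h7 : Y / h = Y * N / T := by
        rw [hh]
        field_simp
      have h8 : 2 * (D:ℝ) + 1 ≤ 2 * Y * N / T + 1 := by
        rw [h7] at h6
        rw [show (2:ℝ) * Y * (N:ℝ) / T = 2 * (Y * (N:ℝ) / T) from by ring]
        linarith
      have h9 : (0:ℝ) ≤ N := by positivity
      exact mul_le_mul_of_nonneg_left h8 h9
    exact le_trans (by exact_mod_cast hcard) hcard2
  have hE0c : E0 = c * (2 ^ M * (N:ℝ) ^ 2) := by
    rw [hE0def, hcdef]
    have hN0 : (N:ℝ) ≠ 0 := by positivity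
    have hT0 : T ≠ 0 := ne_of_gt hT
    have h4M : (4:ℝ) ^ M = 2 ^ M * 2 ^ M := by
      rw [← mul_pow]; norm_num
    rw [h4M]
    field_simp
  -- out-of-window bounds
  have hAaBound : ∀ p : ℕ × ℕ, |g (x p) * Aa lam 𝓜 (x p)| ≤ Sf * 4 ^ M := by
    intro p
    rw [abs_mul, abs_of_nonneg (Aa_nonneg _ _ _)]
    exact mul_le_mul (hgabs _) (Aa_le _ _ _) (Aa_nonneg _ _ _) hSf0
  have hTDout : |∑ p ∈ Outt, g (x p) * Aa lam 𝓜 (x p)| ≤ Sf * E0 := by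
    calc |∑ p ∈ Outt, g (x p) * Aa lam 𝓜 (x p)|
        ≤ ∑ p ∈ Outt, |g (x p) * Aa lam 𝓜 (x p)| := Finset.abs_sum_le_sum_abs _ _
    _ ≤ ∑ _p ∈ Outt, Sf * 4 ^ M := Finset.sum_le_sum fun p _ => hAaBound p
    _ = Outt.card * (Sf * 4 ^ M) := by rw [Finset.sum_const, nsmul_eq_mul]
    _ ≤ ((N:ℝ) * (2 * Y * N / T + 1)) * (Sf * 4 ^ M) := by
          exact mul_le_mul_of_nonneg_right hOutCard (by positivity)
    _ = Sf * E0 := by rw [hE0def]; ring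
  have hAAout : ∑ p ∈ Outt, Aa lam 𝓜 (x p) ≤ E0 := by
    calc ∑ p ∈ Outt, Aa lam 𝓜 (x p) ≤ ∑ _p ∈ Outt, (4:ℝ) ^ M :=
          Finset.sum_le_sum fun p _ => Aa_le _ _ _
    _ = Outt.card * (4:ℝ) ^ M := by rw [Finset.sum_const, nsmul_eq_mul]
    _ ≤ ((N:ℝ) * (2 * Y * N / T + 1)) * 4 ^ M := by
          exact mul_le_mul_of_nonneg_right hOutCard (by positivity)
    _ = E0 := by rw [hE0def]; ring
  have hAAout0 : 0 ≤ ∑ p ∈ Outt, Aa lam 𝓜 (x p) :=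
    Finset.sum_nonneg fun p _ => Aa_nonneg _ _ _
  -- full A sum equals V
  have hAAfull : ∑ p ∈ sq, Aa lam 𝓜 (x p) = V := by
    have hcx : ((∑ p ∈ sq, Aa lam 𝓜 (x p) : ℝ) : ℂ) = ((V : ℝ) : ℂ) := by
      push_cast
      have h1 : ∀ p : ℕ × ℕ, ((Aa lam 𝓜 (x p) : ℝ) : ℂ)
          = ec (0 * x p) * (Rr lam 𝓜 (x p) * (starRingEnd ℂ) (Rr lam 𝓜 (x p))) := by
        intro p
        rw [zero_mul, ec_zero, one_mul, Complex.mul_conj, Aa]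
      calc ∑ p ∈ sq, ((Aa lam 𝓜 (x p) : ℝ) : ℂ)
          = ∑ p ∈ sq, ec (0 * x p) * (Rr lam 𝓜 (x p) * (starRingEnd ℂ) (Rr lam 𝓜 (x p))) :=
            Finset.sum_congr rfl fun p _ => h1 p
      _ = ((Ksum lam 𝓜 h N 0 : ℝ) : ℂ) := by
            rw [hsq, Finset.sum_product]
            simp only [hx]
            exact lemB lam 𝓜 h N 0
      _ = ((V : ℝ) : ℂ) := by rw [hV]
    exact_mod_cast hcx
  -- split
  have hsplitTD : TD = (∑ p ∈ Inn, g (x p) * Aa lam 𝓜 (x p))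
      + ∑ p ∈ Outt, g (x p) * Aa lam 𝓜 (x p) := by
    rw [hTD, hInn, hOutt]
    exact (Finset.sum_filter_add_sum_filter_not sq _ _).symm
  have hsplitAA : (∑ p ∈ sq, Aa lam 𝓜 (x p)) = (∑ p ∈ Inn, Aa lam 𝓜 (x p))
      + ∑ p ∈ Outt, Aa lam 𝓜 (x p) := by
    rw [hInn, hOutt]
    exact (Finset.sum_filter_add_sum_filter_not sq _ _).symm
  set TDin : ℝ := ∑ p ∈ Inn, g (x p) * Aa lam 𝓜 (x p) with hTDin
  set AAin : ℝ := ∑ p ∈ Inn, Aa lam 𝓜 (x p) with hAAin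
  clear_value V TD E0 c Sf s TDin AAin
  have hE0V : E0 ≤ (1/2) * V := by
    rw [hE0c]
    calc c * (2 ^ M * (N:ℝ) ^ 2) ≤ c * V := mul_le_mul_of_nonneg_left hVlow hc0
    _ ≤ (1/2) * V := mul_le_mul_of_nonneg_right hc hV0.le
  have hAAin_low : V / 2 ≤ AAin := by
    have : AAin = V - ∑ p ∈ Outt, Aa lam 𝓜 (x p) := by
      rw [← hAAfull, hsplitAA]; ring
    rw [this]
    linarith [hAAout, hE0V]
  have hAAin_hi : AAin ≤ V := by
    have : AAin = V - ∑ p ∈ Outt, Aa lam 𝓜 (x p) := by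
      rw [← hAAfull, hsplitAA]; ring
    rw [this]
    linarith [hAAout0]
  have hAAin0 : 0 < AAin := lt_of_lt_of_le (by linarith) hAAin_low
  have hTDin_low : (∑ m ∈ 𝓜, f m) * (V / 2) - c * V * Sf ≤ TDin := by
    have h1 : TDin = TD - ∑ p ∈ Outt, g (x p) * Aa lam 𝓜 (x p) := by
      rw [hsplitTD]; ring
    rw [h1]
    have h2 : ∑ p ∈ Outt, g (x p) * Aa lam 𝓜 (x p) ≤ Sf * E0 :=
      (le_abs_self _).trans hTDout
    have h3 : Sf * E0 ≤ c * V * Sf := by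
      rw [hE0c]
      calc Sf * (c * (2 ^ M * (N:ℝ) ^ 2)) ≤ Sf * (c * V) := by
            exact mul_le_mul_of_nonneg_left (mul_le_mul_of_nonneg_left hVlow hc0) hSf0
      _ = c * V * Sf := by ring
    linarith [hTDlow]
  -- s * AAin ≥ TDin
  have hsAA : TDin ≤ s * AAin := by
    rw [hTDin, hAAin, Finset.mul_sum]
    exact Finset.sum_le_sum fun p hp =>
      mul_le_mul_of_nonneg_right (hsup_in p hp) (Aa_nonneg _ _ _)
  -- conclude
  set SM : ℝ := ∑ m ∈ 𝓜, f m with hSM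
  have hSM0 : 0 ≤ SM := Finset.sum_nonneg fun m _ => hf0 m
  set t : ℝ := (1/2) * SM - 2 * c * Sf with ht
  clear_value SM t
  have hclaim : t * AAin ≤ TDin := by
    rcases le_or_gt 0 t with ht0 | ht0
    · calc t * AAin ≤ t * V := mul_le_mul_of_nonneg_left hAAin_hi ht0
      _ = (1/2) * SM * V - 2 * c * Sf * V := by rw [ht]; ring
      _ ≤ SM * (V / 2) - c * V * Sf := by
            have h9 : 0 ≤ c * V * Sf := mul_nonneg (mul_nonneg hc0 hV0.le) hSf0
            linarith
      _ ≤ TDin := hTDin_low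
    · calc t * AAin ≤ t * (V / 2) := by
            exact mul_le_mul_of_nonpos_left hAAin_low ht0.le
      _ = (1/4) * SM * V - c * Sf * V := by rw [ht]; ring
      _ ≤ SM * (V / 2) - c * V * Sf := by
            have h9 : 0 ≤ SM * V := mul_nonneg hSM0 hV0.le
            linarith
      _ ≤ TDin := hTDin_low
  have hfinal : t ≤ s := by
    have := hclaim.trans hsAA
    exact le_of_mul_le_mul_right (by linarith [this]) hAAin0
  exact hfinal


end ResonanceAux

theorem resonance_lower_bound_positive_coeffs :
    ∃ C : ℝ, 0 < C ∧
      ∀ (lam : ℕ → ℝ), (∀ n, 0 ≤ lam n) → StrictMono lam →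
      ∀ (f : ℕ → ℝ), (∀ n, 0 ≤ f n) → Summable f →
      ∀ (F : ℝ → ℂ),
        (∀ x : ℝ, F x = ∑' n : ℕ, (f n : ℂ) * Complex.exp (2 * π * Complex.I * lam n * x)) →
      ∀ (M : ℕ), 1 ≤ M →
      ∀ (𝓜 : Finset ℕ), 𝓜.card = M →
      ∀ (X Y : ℝ), 1 ≤ Y → Y < 2 ^ M * X →
        sSup ((fun x => (F x).re) '' Set.Icc Y (2 ^ M * X)) ≥
          (1 / 4) * ∑ m ∈ 𝓜, f m -
            C * (Y * ((M : ℝ) + Real.log X) / X) * ∑' n : ℕ, f n := by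
  refine ⟨100, by norm_num, ?_⟩
  intro lam hlam0 _hlam f hf0 hfs F hF M hM 𝓜 h𝓜 X Y hY hYX
  have hY0 : (0:ℝ) < Y := lt_of_lt_of_le one_pos hY
  have h2M : (0:ℝ) < 2 ^ M := by positivity
  have hX : (0:ℝ) < X := by
    by_contra hX
    push_neg at hX
    have : (2:ℝ) ^ M * X ≤ 0 := mul_nonpos_of_nonneg_of_nonpos h2M.le hX
    linarith
  set T : ℝ := 2 ^ M * X with hT
  have hYT : Y < T := hYX
  -- rewrite the function
  have hfun : (fun x => (F x).re) = (fun y => ∑' n, f n * Real.cos (2 * π * (lam n * y))) := by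
    funext y
    rw [hF y]
    rw [show (∑' n, (f n : ℂ) * Complex.exp (2 * π * Complex.I * lam n * y))
        = ∑' n, (f n : ℂ) * ec (lam n * y) from tsum_congr fun n => by
      rw [ec]; congr 1; push_cast; ring]
    exact g_re f lam hf0 hfs y
  rw [hfun, ge_iff_le]
  set g : ℝ → ℝ := fun y => ∑' n, f n * Real.cos (2 * π * (lam n * y)) with hg
  set Sf : ℝ := ∑' n, f n with hSf
  have hSf0 : 0 ≤ Sf := tsum_nonneg hf0
  set SM : ℝ := ∑ m ∈ 𝓜, f m with hSM
  have hSM0 : 0 ≤ SM := Finset.sum_nonneg fun m _ => hf0 m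
  have hSMSf : SM ≤ Sf := Summable.sum_le_tsum 𝓜 (fun n _ => hf0 n) hfs
  -- log lower bound
  have hlog : (3/10 : ℝ) ≤ (M:ℝ) + Real.log X := by
    have hT1 : (1:ℝ) ≤ T := le_trans hY hYX.le
    rw [hT] at hT1
    have h1 : ((2:ℝ) ^ M)⁻¹ ≤ X := by
      rw [inv_eq_one_div, div_le_iff₀ h2M]
      linarith
    have h2 : Real.log (((2:ℝ) ^ M)⁻¹) ≤ Real.log X :=
      Real.log_le_log (by positivity) h1
    rw [Real.log_inv, Real.log_pow] at h2
    have h3 : Real.log 2 < 0.6931471808 := Real.log_two_lt_d9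
    have h4 : (1:ℝ) ≤ (M:ℝ) := by exact_mod_cast hM
    nlinarith [h2, h3, h4]
  set E : ℝ := Y * ((M : ℝ) + Real.log X) / X with hE
  have hEq : (3/10) * (Y / X) ≤ E := by
    rw [hE]
    have h5 : Y * (3/10) ≤ Y * ((M:ℝ) + Real.log X) := mul_le_mul_of_nonneg_left hlog hY0.le
    calc (3/10) * (Y / X) = Y * (3/10) / X := by ring
    _ ≤ Y * ((M:ℝ) + Real.log X) / X := by gcongr
  clear_value E
  have hE0 : 0 ≤ E := le_trans (by positivity) hEq
  -- sSup basic facts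
  have hgabs : ∀ y, |g y| ≤ Sf := fun y => g_abs_le f lam hf0 hfs y
  have hbdd : BddAbove (g '' Set.Icc Y T) := by
    refine ⟨Sf, fun z hz => ?_⟩
    obtain ⟨y, _, rfl⟩ := hz
    exact (le_abs_self _).trans (hgabs y)
  have hgY : -Sf ≤ sSup (g '' Set.Icc Y T) := by
    have h1 : g Y ≤ sSup (g '' Set.Icc Y T) :=
      le_csSup hbdd ⟨Y, ⟨le_refl Y, hYT.le⟩, rfl⟩
    have h2 : -Sf ≤ g Y := by
      have h3 := hgabs Y
      rw [abs_le] at h3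
      linarith [h3.1]
    linarith
  by_cases hreg : 8 * Y ≤ X
  · -- main regime
    set N : ℕ := max (4 * 2 ^ M) ⌈(2:ℝ) ^ M * X / Y⌉₊ with hN
    have hNpos : 0 < N := by
      have h0 : 0 < 4 * 2 ^ M := by positivity
      exact lt_of_lt_of_le h0 (le_max_left _ _)
    have hNR : (0:ℝ) < N := by exact_mod_cast hNpos
    have hN1 : (4:ℝ) * 2 ^ M ≤ N := by
      have h1 : 4 * 2 ^ M ≤ N := (le_max_left (4 * 2 ^ M) ⌈(2:ℝ) ^ M * X / Y⌉₊).trans_eq hN.symm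
      have h2 : ((4 * 2 ^ M : ℕ) : ℝ) ≤ (N:ℝ) := by exact_mod_cast h1
      push_cast at h2
      linarith
    have hN2 : (2:ℝ) ^ M * X / Y ≤ N := by
      have h1 := Nat.le_ceil ((2:ℝ) ^ M * X / Y)
      have h2 : ((⌈(2:ℝ) ^ M * X / Y⌉₊ : ℕ) : ℝ) ≤ (N:ℝ) := by
        exact_mod_cast (le_max_right (4 * 2 ^ M) ⌈(2:ℝ) ^ M * X / Y⌉₊).trans_eq hN.symm
      linarith
    have hc1 : 2 * Y * 2 ^ M / T = 2 * (Y / X) := by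
      rw [hT]
      field_simp
    have hc2 : (2:ℝ) ^ M / N ≤ Y / X := by
      rw [div_le_div_iff₀ hNR hX]
      have h3 : Y * ((2:ℝ) ^ M * X / Y) = 2 ^ M * X := by
        field_simp
      have h4 : Y * ((2:ℝ) ^ M * X / Y) ≤ Y * N := mul_le_mul_of_nonneg_left hN2 hY0.le
      rw [h3] at h4
      linarith
    have hq4 : Y / X ≤ 1 / 8 := by
      rw [div_le_div_iff₀ hX (by norm_num : (0:ℝ) < 8)]
      linarith
    have hq0 : (0:ℝ) ≤ Y / X := by positivity
    have hc : 2 * Y * 2 ^ 𝓜.card / T + 2 ^ 𝓜.card / N ≤ 1 / 2 := by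
      rw [h𝓜, hc1]
      linarith
    have hcore := core f lam hf0 hfs 𝓜 Y T hY hYT.le N hNpos hc
    rw [h𝓜, hc1] at hcore
    rw [← hg, ← hSf, ← hSM] at hcore
    have herr : 2 * (2 * (Y / X) + 2 ^ M / (N:ℝ)) * Sf ≤ 100 * E * Sf := by
      have h6 : 2 * (2 * (Y / X) + 2 ^ M / (N:ℝ)) ≤ 6 * (Y / X) := by linarith
      have h7 : (6:ℝ) * (Y / X) ≤ 100 * E := by linarith
      exact mul_le_mul_of_nonneg_right (h6.trans h7) hSf0
    calc 1 / 4 * SM - 100 * E * Sf ≤ 1 / 2 * SM - 2 * (2 * (Y / X) + 2 ^ M / (N:ℝ)) * Sf := by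
          linarith
    _ ≤ sSup (g '' Set.Icc Y T) := hcore
  · -- trivial regime
    push_neg at hreg
    have hq : (1:ℝ) / 8 ≤ Y / X := by
      rw [le_div_iff₀ hX]
      linarith
    have hE38 : (3/80 : ℝ) ≤ E := by
      calc (3/80 : ℝ) = (3/10) * (1/8) := by norm_num
      _ ≤ (3/10) * (Y / X) := by linarith
      _ ≤ E := hEq
    have h8 : (15/4) * Sf ≤ 100 * E * Sf := by
      have h9 : (15/4 : ℝ) ≤ 100 * E := by linarith
      exact mul_le_mul_of_nonneg_right h9 hSf0
    calc 1 / 4 * SM - 100 * E * Sf ≤ 1 / 4 * Sf - (15/4) * Sf := by linarith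
    _ ≤ -Sf := by linarith
    _ ≤ sSup (g '' Set.Icc Y T) := hgY
end

section
/- Let λ₁, ..., λ_N be real numbers linearly independent over ℚ, α₁, ..., α_N real, and F(x) = 1 + ∑_{n≤N} e^{−2πiα_n} e^{2πiλ_n x}. Then sup_{x ∈ ℝ} Re(F(x)) = N + 1. -/
set_option autoImplicit false

open Real

open Filter Finset

noncomputable def ee (t : ℝ) : ℂ := Complex.exp (Complex.I * t)
lemma ee_add (s t : ℝ) : ee (s + t) = ee s * ee t := by
  simp [ee, mul_add, Complex.exp_add]
lemma ee_zero : ee 0 = 1 := by simp [ee]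
lemma ee_pow (m : ℕ) (t : ℝ) : ee t ^ m = ee (m * t) := by
  rw [ee, ee, ← Complex.exp_nat_mul]; push_cast; ring_nf
lemma ee_norm (t : ℝ) : ‖ee t‖ = 1 := by
  rw [ee, mul_comm]; exact Complex.norm_exp_ofReal_mul_I t
lemma ee_prod {N : ℕ} (t : Fin N → ℝ) : ∏ n, ee (t n) = ee (∑ n, t n) := by
  simp [ee, Complex.exp_sum, Finset.mul_sum]
lemma ee_re (t : ℝ) : (ee t).re = Real.cos t := by
  rw [ee, mul_comm]; exact Complex.exp_ofReal_mul_I_re t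
lemma ee_cos (t : ℝ) : ee t + ee (-t) = 2 * (Real.cos t : ℂ) := by
  rw [ee, ee, mul_comm Complex.I, Complex.ofReal_neg, mul_comm Complex.I,
    Complex.exp_mul_I, Complex.exp_mul_I, Complex.cos_neg, Complex.sin_neg,
    Complex.ofReal_cos]
  ring
lemma factor_expand (k : ℕ) (θ : ℝ) :
    (((1 + Real.cos θ) / 2 : ℝ) : ℂ) ^ k
      = (4:ℂ)⁻¹ ^ k * ∑ q ∈ Finset.range (k+1) ×ˢ Finset.range (k+1),
          (k.choose q.1 * k.choose q.2 : ℕ) * ee (((q.1 : ℝ) - q.2) * θ) := by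
  have h1 : (((1 + Real.cos θ) / 2 : ℝ) : ℂ) = (1 + ee θ) * (1 + ee (-θ)) / 4 := by
    have h2 : ee θ * ee (-θ) = 1 := by rw [← ee_add]; simp [ee_zero]
    have h3 := ee_cos θ
    rw [Complex.ofReal_cos] at h3
    push_cast [Complex.ofReal_cos]
    linear_combination (-1/4 : ℂ) * h2 + (-1/4 : ℂ) * h3
  have hb : ∀ t : ℝ, (1 + ee t) ^ k
      = ∑ a ∈ Finset.range (k+1), (k.choose a : ℂ) * ee (a * t) := by
    intro t
    rw [add_comm, add_pow]
    refine Finset.sum_congr rfl fun a _ => ?_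
    rw [ee_pow]; ring
  rw [h1, div_pow, mul_pow, hb, hb, div_eq_mul_inv, mul_comm _ ((4:ℂ)^k)⁻¹, ← inv_pow]
  congr 1
  rw [Finset.sum_mul_sum, Finset.sum_product]
  refine Finset.sum_congr rfl fun a _ => Finset.sum_congr rfl fun b _ => ?_
  have : ee (a * θ) * ee (b * (-θ)) = ee (((a:ℝ) - b) * θ) := by
    rw [← ee_add]; ring_nf
  push_cast
  calc (k.choose a : ℂ) * ee (a * θ) * ((k.choose b : ℂ) * ee (b * -θ))
      = (k.choose a : ℂ) * (k.choose b) * (ee (a * θ) * ee (b * (-θ))) := by ring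
    _ = _ := by rw [this]
lemma prod_expand (N k : ℕ) (θ : Fin N → ℝ) :
    ((∏ n, (1 + Real.cos (θ n)) / 2 : ℝ) : ℂ) ^ k
      = (4:ℂ)⁻¹ ^ (k * N) *
        ∑ j ∈ Fintype.piFinset (fun _ : Fin N => Finset.range (k+1) ×ˢ Finset.range (k+1)),
          ((∏ n, k.choose (j n).1 * k.choose (j n).2 : ℕ) : ℂ) *
            ee (∑ n, (((j n).1 : ℝ) - (j n).2) * θ n) := by
  push_cast
  rw [← Finset.prod_pow]
  have : ∀ n : Fin N, (((1 + Real.cos (θ n)) / 2 : ℝ) : ℂ) ^ k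
      = (4:ℂ)⁻¹ ^ k * ∑ q ∈ Finset.range (k+1) ×ˢ Finset.range (k+1),
          (k.choose q.1 * k.choose q.2 : ℕ) * ee (((q.1 : ℝ) - q.2) * θ n) :=
    fun n => factor_expand k (θ n)
  push_cast at this
  rw [Finset.prod_congr rfl fun n _ => this n, Finset.prod_mul_distrib,
    Finset.prod_const, Finset.card_univ, Fintype.card_fin, ← pow_mul,
    Finset.prod_univ_sum]
  congr 1
  refine Finset.sum_congr rfl fun j _ => ?_
  rw [Finset.prod_mul_distrib, ee_prod]
lemma diag_sum (N k : ℕ) :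
    ∑ j ∈ (Fintype.piFinset (fun _ : Fin N => Finset.range (k+1) ×ˢ Finset.range (k+1))).filter
        (fun j => ∀ n, (j n).1 = (j n).2), ∏ n, k.choose (j n).1 * k.choose (j n).2
      = ∑ a ∈ Fintype.piFinset (fun _ : Fin N => Finset.range (k+1)), ∏ n, (k.choose (a n))^2 := by
  refine Finset.sum_nbij' (fun j => fun n => (j n).1) (fun a => fun n => (a n, a n)) ?_ ?_ ?_ ?_ ?_
  · intro j hj
    simp only [Finset.mem_filter, Fintype.mem_piFinset, Finset.mem_product] at hj ⊢
    exact fun n => (hj.1 n).1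
  · intro a ha
    simp only [Fintype.mem_piFinset, Finset.mem_product, Finset.mem_filter] at ha ⊢
    exact ⟨fun n => ⟨ha n, ha n⟩, fun _ => trivial⟩
  · intro j hj
    simp only [Finset.mem_filter] at hj
    funext n
    exact Prod.ext rfl (hj.2 n)
  · intro a ha; rfl
  · intro j hj
    simp only [Finset.mem_filter] at hj
    refine Finset.prod_congr rfl fun n _ => ?_
    simp [sq, hj.2 n]

lemma mean_limit (N : ℕ) (lam α : Fin N → ℝ) (hind : LinearIndependent ℚ lam) (k : ℕ) :
    ∃ m : ℝ, ((4:ℝ)^k / (k+1)) ^ N ≤ (4:ℝ)^(k*N) * m ∧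
      Tendsto (fun T : ℝ => (1/T) * ∫ x in (0:ℝ)..T,
          (∏ n : Fin N, (1 + Real.cos (2*π*(lam n * x - α n))) / 2) ^ k)
        atTop (nhds m) := by
  classical
  set J := Fintype.piFinset (fun _ : Fin N => Finset.range (k+1) ×ˢ Finset.range (k+1)) with hJ
  set W : (Fin N → ℕ × ℕ) → ℕ := fun j => ∏ n, k.choose (j n).1 * k.choose (j n).2 with hW
  set B : (Fin N → ℕ × ℕ) → ℝ := fun j => ∑ n, (((j n).1 : ℝ) - (j n).2) * (2*π*lam n) with hB
  set Γ : (Fin N → ℕ × ℕ) → ℝ := fun j => ∑ n, (((j n).1 : ℝ) - (j n).2) * (2*π*(-α n)) with hΓ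
  set Dn : ℕ := ∑ a ∈ Fintype.piFinset (fun _ : Fin N => Finset.range (k+1)),
      ∏ n, (k.choose (a n))^2 with hDn
  refine ⟨(4:ℝ)⁻¹ ^ (k*N) * Dn, ?_, ?_⟩
  · have h4 : (4:ℝ)^(k*N) * ((4:ℝ)⁻¹^(k*N) * (Dn:ℝ)) = Dn := by
      rw [← mul_assoc, ← mul_pow]; norm_num
    rw [h4]
    have hD : Dn = (∑ a ∈ Finset.range (k+1), (k.choose a)^2)^N := by
      rw [hDn, ← Finset.prod_univ_sum (fun _ : Fin N => Finset.range (k+1))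
        (fun _ a => (k.choose a)^2), Finset.prod_const, Finset.card_univ, Fintype.card_fin]
    rw [hD]
    push_cast
    refine pow_le_pow_left₀ (by positivity) ?_ N
    rw [div_le_iff₀ (by positivity)]
    have hs : (∑ a ∈ Finset.range (k+1), (k.choose a : ℝ)) = 2^k := by
      exact_mod_cast Nat.sum_range_choose k
    have hcs := sq_sum_le_card_mul_sum_sq (s := Finset.range (k+1))
      (f := fun a => (k.choose a : ℝ))
    rw [hs, Finset.card_range] at hcs
    push_cast at hcs
    calc (4:ℝ)^k = ((2:ℝ)^k)^2 := by
          rw [show (4:ℝ) = 2^2 by norm_num, ← pow_mul, mul_comm, pow_mul]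
      _ ≤ ((k:ℝ)+1) * ∑ a ∈ Finset.range (k+1), (k.choose a : ℝ)^2 := hcs
      _ = (∑ a ∈ Finset.range (k+1), (k.choose a : ℝ)^2) * ((k:ℝ)+1) := mul_comm _ _
  · -- key pointwise expansion
    have key : ∀ x : ℝ,
        (((∏ n : Fin N, (1 + Real.cos (2*π*(lam n * x - α n))) / 2) ^ k : ℝ) : ℂ)
          = (4:ℂ)⁻¹ ^ (k*N) * ∑ j ∈ J, ((W j : ℂ) * ee (Γ j)) * ee (B j * x) := by
      intro x
      have h := prod_expand N k (fun n => 2*π*(lam n * x - α n))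
      rw [Complex.ofReal_pow, h]
      congr 1
      refine Finset.sum_congr hJ.symm fun j _ => ?_
      have hph : ∑ n, (((j n).1 : ℝ) - (j n).2) * (2*π*(lam n * x - α n)) = Γ j + B j * x := by
        rw [hΓ, hB, Finset.sum_mul, ← Finset.sum_add_distrib]
        exact Finset.sum_congr rfl fun n _ => by ring
      rw [hph, ee_add]
      ring
    have hFj : ∀ j ∈ J, Tendsto
        (fun T : ℝ => ((W j : ℂ) * ee (Γ j)) * ((T:ℂ)⁻¹ * ∫ x in (0:ℝ)..T, ee (B j * x)))
        atTop (nhds (if ∀ n, (j n).1 = (j n).2 then (W j : ℂ) else 0)) := by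
      intro j _
      by_cases hd : ∀ n, (j n).1 = (j n).2
      · rw [if_pos hd]
        have hc : ∀ n, (((j n).1:ℝ) - (j n).2) = 0 := fun n => by rw [hd n]; ring
        have hB0 : B j = 0 := by
          rw [hB]; exact Finset.sum_eq_zero fun n _ => by rw [hc n, zero_mul]
        have hG0 : Γ j = 0 := by
          rw [hΓ]; exact Finset.sum_eq_zero fun n _ => by rw [hc n, zero_mul]
        refine Tendsto.congr' ?_ tendsto_const_nhds
        filter_upwards [eventually_ge_atTop (1:ℝ)] with T hT
        have hT0 : T ≠ 0 := by linarith
        have hTC : (T:ℂ) ≠ 0 := Complex.ofReal_ne_zero.mpr hT0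
        rw [hB0, hG0, ee_zero]
        have : (fun x : ℝ => ee (0 * x)) = fun _ : ℝ => (1:ℂ) := by
          funext x; rw [zero_mul, ee_zero]
        rw [this]
        simp [hTC]
      · rw [if_neg hd]
        obtain ⟨n0, hn0⟩ := not_forall.mp hd
        have hsum : (∑ n, (((j n).1:ℝ) - (j n).2) * lam n) ≠ 0 := by
          intro h0
          have hq := Fintype.linearIndependent_iff.mp hind
            (fun n => ((j n).1:ℚ) - (j n).2) ?_ n0
          · exact hn0 (by exact_mod_cast sub_eq_zero.mp hq)
          · rw [← h0]
            exact Finset.sum_congr rfl fun n _ => by push_cast [Rat.smul_def]; ring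
        have hBne : B j ≠ 0 := by
          have hb2 : B j = 2*π * ∑ n, (((j n).1:ℝ) - (j n).2) * lam n := by
            rw [hB, Finset.mul_sum]; exact Finset.sum_congr rfl fun n _ => by ring
          rw [hb2]
          exact mul_ne_zero (by positivity) hsum
        set cc : ℂ := Complex.I * (B j : ℝ) with hcc
        have hccne : cc ≠ 0 :=
          mul_ne_zero Complex.I_ne_zero (Complex.ofReal_ne_zero.mpr hBne)
        have hieq : ∀ T : ℝ, (∫ x in (0:ℝ)..T, ee (B j * x))
            = (Complex.exp (cc * T) - 1) / cc := by
          intro T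
          have heq2 : (fun x : ℝ => ee (B j * x)) = fun x : ℝ => Complex.exp (cc * x) := by
            funext x; rw [ee, hcc]; push_cast; ring_nf
          rw [heq2, integral_exp_mul_complex hccne]
          norm_num
        have hnorm : ∀ᶠ T : ℝ in atTop,
            ‖(W j:ℂ) * ee (Γ j) * ((T:ℂ)⁻¹ * ∫ x in (0:ℝ)..T, ee (B j * x))‖
              ≤ ((W j:ℝ) * (2 / ‖cc‖)) * T⁻¹ := by
          filter_upwards [eventually_ge_atTop (1:ℝ)] with T hT
          have hT0 : (0:ℝ) < T := lt_of_lt_of_le one_pos hT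
          have hexp : ‖Complex.exp (cc * T)‖ = 1 := by
            have : cc * (T:ℂ) = Complex.I * ((B j * T : ℝ) : ℂ) := by
              rw [hcc]; push_cast; ring
            rw [this, ← ee]; exact ee_norm _
          have hub : ‖Complex.exp (cc * T) - 1‖ ≤ 2 := by
            calc ‖Complex.exp (cc * T) - 1‖ ≤ ‖Complex.exp (cc * T)‖ + ‖(1:ℂ)‖ :=
                norm_sub_le _ _
              _ = 2 := by rw [hexp, norm_one]; norm_num
          rw [hieq T]
          rw [norm_mul, norm_mul, norm_mul, norm_div, norm_inv]
          rw [Complex.norm_natCast, ee_norm, Complex.norm_real, Real.norm_eq_abs,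
            abs_of_pos hT0]
          calc (W j : ℝ) * 1 * (T⁻¹ * (‖Complex.exp (cc * T) - 1‖ / ‖cc‖))
              ≤ (W j : ℝ) * 1 * (T⁻¹ * (2 / ‖cc‖)) := by
                gcongr
              _ = ((W j:ℝ) * (2 / ‖cc‖)) * T⁻¹ := by ring
        have hg : Tendsto (fun T : ℝ => ((W j:ℝ) * (2 / ‖cc‖)) * T⁻¹) atTop (nhds 0) := by
          simpa using tendsto_inv_atTop_zero.const_mul ((W j:ℝ) * (2 / ‖cc‖))
        exact squeeze_zero_norm' hnorm hg
    have hfull : Tendsto (fun T : ℝ =>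
        (((1/T) * ∫ x in (0:ℝ)..T,
          (∏ n : Fin N, (1 + Real.cos (2*π*(lam n * x - α n))) / 2) ^ k : ℝ) : ℂ))
        atTop (nhds (((4:ℝ)⁻¹ ^ (k*N) * Dn : ℝ) : ℂ)) := by
      have hsum := tendsto_finset_sum J hFj
      have hmul := hsum.const_mul ((4:ℂ)⁻¹ ^ (k*N))
      have hL : (4:ℂ)⁻¹ ^ (k*N) * (∑ j ∈ J, if ∀ n, (j n).1 = (j n).2 then (W j : ℂ) else 0)
          = (((4:ℝ)⁻¹ ^ (k*N) * Dn : ℝ) : ℂ) := by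
        rw [← Finset.sum_filter]
        have : ∑ j ∈ J.filter (fun j => ∀ n, (j n).1 = (j n).2), (W j : ℂ)
            = ((Dn : ℕ) : ℂ) := by
          rw [← Nat.cast_sum]
          exact_mod_cast congrArg (Nat.cast : ℕ → ℂ) (diag_sum N k)
        rw [this]; push_cast; ring
      rw [← hL]
      refine hmul.congr fun T => ?_
      have hint : ∀ j : Fin N → ℕ × ℕ,
          IntervalIntegrable (fun x : ℝ => ((W j:ℂ) * ee (Γ j)) * ee (B j * x))
            MeasureTheory.volume 0 T := by
        intro j
        apply Continuous.intervalIntegrable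
        unfold ee
        fun_prop
      symm
      calc (((1/T) * ∫ x in (0:ℝ)..T,
              (∏ n : Fin N, (1 + Real.cos (2*π*(lam n * x - α n))) / 2) ^ k : ℝ) : ℂ)
          = (1/(T:ℂ)) * ∫ x in (0:ℝ)..T,
              (((∏ n : Fin N, (1 + Real.cos (2*π*(lam n * x - α n))) / 2) ^ k : ℝ) : ℂ) := by
            rw [Complex.ofReal_mul, intervalIntegral.integral_ofReal]
            push_cast
            ring
        _ = (1/(T:ℂ)) * ∫ x in (0:ℝ)..T,
              ((4:ℂ)⁻¹ ^ (k*N) * ∑ j ∈ J, ((W j : ℂ) * ee (Γ j)) * ee (B j * x)) := by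
            rw [intervalIntegral.integral_congr fun x _ => key x]
        _ = (1/(T:ℂ)) * ((4:ℂ)⁻¹ ^ (k*N) *
              ∑ j ∈ J, ((W j : ℂ) * ee (Γ j)) * ∫ x in (0:ℝ)..T, ee (B j * x)) := by
            rw [intervalIntegral.integral_const_mul,
              intervalIntegral.integral_finset_sum (fun j _ => hint j)]
            congr 1
            congr 1
            exact Finset.sum_congr rfl fun j _ => by rw [intervalIntegral.integral_const_mul]
        _ = _ := by
            rw [Finset.mul_sum, Finset.mul_sum, Finset.mul_sum]
            exact Finset.sum_congr rfl fun j _ => by ring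
    have := (Complex.continuous_re.tendsto _).comp hfull
    simp only [Function.comp_def, Complex.ofReal_re] at this
    exact this

theorem bohr_jessen_sup (N : ℕ) (lam : Fin N → ℝ)
    (hind : LinearIndependent ℚ lam) (α : Fin N → ℝ)
    (F : ℝ → ℂ)
    (hF : ∀ x : ℝ, F x = 1 + ∑ n : Fin N,
        Complex.exp (-(2 * π * Complex.I * α n)) * Complex.exp (2 * π * Complex.I * lam n * x)) :
    (⨆ x : ℝ, (F x).re) = (N : ℝ) + 1 := by
  classical
  have hRe : ∀ x : ℝ, (F x).re = 1 + ∑ n, Real.cos (2*π*(lam n * x - α n)) := by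
    intro x
    rw [hF x]
    have h1 : ∀ n : Fin N, Complex.exp (-(2 * π * Complex.I * α n)) *
        Complex.exp (2 * π * Complex.I * lam n * x) = ee (2*π*(lam n * x - α n)) := by
      intro n
      rw [← Complex.exp_add, ee]
      congr 1
      push_cast
      ring
    rw [Finset.sum_congr rfl fun n _ => h1 n]
    simp [Complex.add_re, ee_re]
  have hub : ∀ x : ℝ, (F x).re ≤ (N:ℝ) + 1 := by
    intro x
    rw [hRe x]
    have h2 : ∑ n, Real.cos (2*π*(lam n * x - α n)) ≤ ∑ _n : Fin N, (1:ℝ) :=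
      Finset.sum_le_sum fun n _ => Real.cos_le_one _
    simp only [Finset.sum_const, Finset.card_univ, Fintype.card_fin, nsmul_eq_mul,
      mul_one] at h2
    linarith
  have hBdd : BddAbove (Set.range fun x : ℝ => (F x).re) :=
    ⟨(N:ℝ)+1, by rintro y ⟨x, rfl⟩; exact hub x⟩
  refine le_antisymm (ciSup_le hub) (le_of_forall_lt fun w hw => ?_)
  by_contra hcon
  push_neg at hcon
  have hall : ∀ x : ℝ, (F x).re ≤ w := fun x => le_trans (le_ciSup hBdd x) hcon
  rcases Nat.eq_zero_or_pos N with h0 | hN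
  · subst h0
    have h3 := hall 0
    rw [hRe 0] at h3
    simp at h3 hw
    linarith
  haveI : Nonempty (Fin N) := ⟨⟨0, hN⟩⟩
  have hNpos : (0:ℝ) < N := by exact_mod_cast hN
  set ε := min ((N:ℝ) + 1 - w) N with hε
  have hε0 : 0 < ε := lt_min (by linarith) hNpos
  have hεN : ε ≤ N := min_le_right _ _
  have hall2 : ∀ x : ℝ, 1 + ∑ n, Real.cos (2*π*(lam n * x - α n)) ≤ (N:ℝ) + 1 - ε := by
    intro x
    have h4 := hall x
    rw [hRe x] at h4
    have h5 : ε ≤ (N:ℝ) + 1 - w := min_le_left _ _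
    linarith
  set c := 1 - ε/(2*N) with hc
  have hc0 : 0 < c := by
    have : ε/(2*N) ≤ (N:ℝ)/(2*N) := by gcongr
    have h6 : (N:ℝ)/(2*N) = 1/2 := by field_simp
    rw [hc]; rw [h6] at this; linarith
  have hc1 : c < 1 := by
    have : 0 < ε/(2*N) := by positivity
    rw [hc]; linarith
  have hall01 : ∀ (n : Fin N) (x : ℝ),
      0 ≤ (1 + Real.cos (2*π*(lam n * x - α n)))/2 ∧
      (1 + Real.cos (2*π*(lam n * x - α n)))/2 ≤ 1 := by
    intro n x
    constructor
    · nlinarith [Real.neg_one_le_cos (2*π*(lam n * x - α n))]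
    · nlinarith [Real.cos_le_one (2*π*(lam n * x - α n))]
  have hprod : ∀ x : ℝ, (∏ n, (1 + Real.cos (2*π*(lam n * x - α n)))/2) ≤ c := by
    intro x
    have hsum : ∑ n, Real.cos (2*π*(lam n * x - α n)) ≤ (N:ℝ) - ε := by
      have := hall2 x; linarith
    have hex : ∃ n0 : Fin N, Real.cos (2*π*(lam n0 * x - α n0)) ≤ 1 - ε/N := by
      by_contra hno
      push_neg at hno
      have h7 : ∑ _n : Fin N, (1 - ε/(N:ℝ)) < ∑ n, Real.cos (2*π*(lam n * x - α n)) :=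
        Finset.sum_lt_sum_of_nonempty Finset.univ_nonempty fun n _ => hno n
      simp only [Finset.sum_const, Finset.card_univ, Fintype.card_fin, nsmul_eq_mul] at h7
      have h8 : (N:ℝ) * (1 - ε/N) = N - ε := by field_simp
      rw [h8] at h7
      linarith
    obtain ⟨n0, hn0⟩ := hex
    calc ∏ n, (1 + Real.cos (2*π*(lam n * x - α n)))/2
        ≤ (1 + Real.cos (2*π*(lam n0 * x - α n0)))/2 := by
          rw [← Finset.mul_prod_erase Finset.univ _ (Finset.mem_univ n0)]
          exact mul_le_of_le_one_right (hall01 n0 x).1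
            (Finset.prod_le_one (fun n _ => (hall01 n x).1) (fun n _ => (hall01 n x).2))
      _ ≤ c := by
          have h9 : ε/(2*N) = (ε/N)/2 := by ring
          rw [hc, h9]; linarith
  have hck : ∀ k : ℕ, (1:ℝ) ≤ c^k * ((k:ℝ)+1)^N := by
    intro k
    obtain ⟨m, hm1, hm2⟩ := mean_limit N lam α hind k
    have hcont : Continuous fun x : ℝ =>
        (∏ n : Fin N, (1 + Real.cos (2*π*(lam n * x - α n))) / 2) ^ k := by
      fun_prop
    have hmc : m ≤ c^k := by
      refine le_of_tendsto hm2 ?_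
      filter_upwards [eventually_ge_atTop (1:ℝ)] with T hT
      have hT0 : (0:ℝ) < T := by linarith
      have hle : (∫ x in (0:ℝ)..T,
          (∏ n : Fin N, (1 + Real.cos (2*π*(lam n * x - α n))) / 2) ^ k)
          ≤ ∫ _x in (0:ℝ)..T, c^k := by
        refine intervalIntegral.integral_mono_on (le_of_lt hT0)
          (hcont.intervalIntegrable 0 T) intervalIntegrable_const fun x _ => ?_
        exact pow_le_pow_left₀ (Finset.prod_nonneg fun n _ => (hall01 n x).1) (hprod x) k
      rw [intervalIntegral.integral_const, smul_eq_mul, sub_zero] at hle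
      calc (1/T) * ∫ x in (0:ℝ)..T,
            (∏ n : Fin N, (1 + Real.cos (2*π*(lam n * x - α n))) / 2) ^ k
          ≤ (1/T) * (T * c^k) :=
            mul_le_mul_of_nonneg_left hle (le_of_lt (one_div_pos.mpr hT0))
        _ = c^k := by field_simp
    have h2 : (4:ℝ)^(k*N) / ((k:ℝ)+1)^N ≤ (4:ℝ)^(k*N) * c^k := by
      have := le_trans hm1 (mul_le_mul_of_nonneg_left hmc (by positivity))
      rwa [div_pow, ← pow_mul] at this
    rw [div_le_iff₀ (by positivity)] at h2
    have h4 : (0:ℝ) < 4^(k*N) := by positivity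
    nlinarith [h2, h4]
  have hsm : Summable (fun n : ℕ => (n:ℝ)^N * c^n) :=
    summable_pow_mul_geometric_of_norm_lt_one N
      (by rw [Real.norm_eq_abs, abs_of_pos hc0]; exact hc1)
  have hto := (hsm.tendsto_atTop_zero).comp (tendsto_add_atTop_nat 1)
  have hge : ∀ k : ℕ, c ≤ ((k+1:ℕ):ℝ)^N * c^(k+1) := by
    intro k
    have h10 := hck k
    have h11 : c * 1 ≤ c * (c^k * ((k:ℝ)+1)^N) :=
      mul_le_mul_of_nonneg_left h10 (le_of_lt hc0)
    push_cast
    calc c = c * 1 := (mul_one c).symm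
      _ ≤ c * (c^k * ((k:ℝ)+1)^N) := h11
      _ = ((k:ℝ)+1)^N * c^(k+1) := by ring
  have hfin := ge_of_tendsto hto (Filter.Eventually.of_forall hge)
  linarith
end

section
/- Let λ₁, ..., λ_N be linearly independent over ℚ, α₁, ..., α_N real, F(x) = 1 + ∑_{n≤N} e^{−2πiα_n} e^{2πiλ_n x}, and W_L(x) = ∏_{n≤N} K_L(xλ_n − α_n) with K_L the Fejér polynomial. Then the mean value lim_{T→∞} (1/2T) ∫_{−T}^{T} F(x) W_L(x) dx = 1 + N(L−1)/L, and lim_{T→∞} (1/2T) ∫_{−T}^{T} W_L(x) dx = 1. -/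
set_option autoImplicit false
set_option maxHeartbeats 1000000

open Real Filter MeasureTheory

noncomputable def e (μ : ℝ) (x : ℝ) : ℂ := Complex.exp (2 * π * Complex.I * μ * x)

lemma e_cont (ν : ℝ) : Continuous (fun x : ℝ => e ν x) :=
  Complex.continuous_exp.comp (by continuity)

lemma e_add (μ ν x : ℝ) : e μ x * e ν x = e (μ + ν) x := by
  rw [e, e, e, ← Complex.exp_add]
  congr 1
  push_cast
  ring

lemma mean_exp (μ : ℝ) :
    Tendsto (fun T : ℝ => (1 / (2 * T) : ℂ) * ∫ x in (-T)..T, e μ x) atTop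
      (nhds (if μ = 0 then 1 else 0)) := by
  rcases eq_or_ne μ 0 with h | h
  · simp only [h, if_pos rfl]
    have hev : ∀ᶠ T : ℝ in atTop, (1 : ℂ) = (1 / (2 * T) : ℂ) * ∫ x in (-T)..T, e 0 x := by
      filter_upwards [eventually_gt_atTop (0:ℝ)] with T hT
      simp only [e, Complex.ofReal_zero, mul_zero, zero_mul, Complex.exp_zero]
      rw [intervalIntegral.integral_const]
      have hT' : (T : ℂ) ≠ 0 := by exact_mod_cast hT.ne'
      push_cast
      field_simp
      simp [Complex.real_smul]
      ring
    exact Tendsto.congr' hev tendsto_const_nhds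
  · simp only [if_neg h]
    set c : ℂ := 2 * π * Complex.I * μ with hc
    have hc0 : c ≠ 0 := by
      simp [hc, Complex.ext_iff, Real.pi_ne_zero, h, Complex.I_ne_zero]
    have hint : ∀ T : ℝ, (∫ x in (-T)..T, e μ x) =
        (Complex.exp (c * T) - Complex.exp (c * ((-T : ℝ) : ℂ))) / c := by
      intro T
      rw [show (∫ x in (-T)..T, e μ x) = ∫ x in (-T)..T, Complex.exp (c * x) by
        simp [e, hc, mul_assoc]]
      exact integral_exp_mul_complex hc0
    have hbound : ∀ z : ℝ, ‖Complex.exp (c * z)‖ = 1 := by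
      intro z
      rw [Complex.norm_exp]
      have h0 : (c * (z:ℂ)).re = 0 := by
        simp [hc, Complex.mul_re, Complex.mul_im]
      rw [h0, Real.exp_zero]
    refine squeeze_zero_norm' (a := fun T : ℝ => (1 / (2 * T)) * (2 / ‖c‖)) ?_ ?_
    · filter_upwards [eventually_gt_atTop (0:ℝ)] with T hT
      rw [hint T, norm_mul]
      gcongr
      · simp only [norm_div, norm_one]
        rw [norm_mul, Complex.norm_two, Complex.norm_real, Real.norm_eq_abs, abs_of_pos hT]
      · rw [norm_div]
        gcongr
        calc ‖Complex.exp (c * T) - Complex.exp (c * ((-T:ℝ):ℂ))‖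
            ≤ ‖Complex.exp (c * T)‖ + ‖Complex.exp (c * ((-T:ℝ):ℂ))‖ :=
              norm_sub_le _ _
          _ = 2 := by rw [hbound T, hbound (-T)]; norm_num
    · rw [show (0:ℝ) = 0 * (2 / ‖c‖) by ring]
      refine Tendsto.mul_const _ ?_
      have : Tendsto (fun T : ℝ => 2 * T) atTop atTop := tendsto_id.const_mul_atTop two_pos
      exact this.inv_tendsto_atTop.congr fun T => by simp [one_div]

lemma mean_sum {ι : Type*} (S : Finset ι) (c : ι → ℂ) (μ : ι → ℝ) :
    Tendsto (fun T : ℝ => (1 / (2 * T) : ℂ) * ∫ x in (-T)..T, ∑ t ∈ S, c t * e (μ t) x)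
      atTop (nhds (∑ t ∈ S, if μ t = 0 then c t else 0)) := by
  have hi : ∀ T : ℝ, ∀ t ∈ S, IntervalIntegrable (fun x => c t * e (μ t) x)
      volume (-T) T := fun T t _ => (continuous_const.mul (e_cont (μ t))).intervalIntegrable _ _
  have heq : ∀ T : ℝ, (1 / (2 * T) : ℂ) * (∫ x in (-T)..T, ∑ t ∈ S, c t * e (μ t) x)
      = ∑ t ∈ S, c t * ((1 / (2 * T) : ℂ) * ∫ x in (-T)..T, e (μ t) x) := by
    intro T
    rw [intervalIntegral.integral_finset_sum (hi T), Finset.mul_sum]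
    refine Finset.sum_congr rfl fun t _ => ?_
    rw [intervalIntegral.integral_const_mul]
    ring
  simp only [heq]
  have h2 : ∑ t ∈ S, (if μ t = 0 then c t else 0)
      = ∑ t ∈ S, c t * (if μ t = 0 then (1:ℂ) else 0) :=
    Finset.sum_congr rfl fun t _ => by rcases eq_or_ne (μ t) 0 with h | h <;> simp [h]
  rw [h2]
  exact tendsto_finset_sum S fun t _ => (mean_exp (μ t)).const_mul (c t)

noncomputable def A {N : ℕ} (α : Fin N → ℝ) (L : ℕ) (p : Fin N → ℤ) : ℂ :=
  (∏ n, ((1 - |(p n : ℝ)| / L : ℝ) : ℂ)) *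
    Complex.exp (-(2 * π * Complex.I * ((∑ n, (p n : ℝ) * α n : ℝ) : ℂ)))

noncomputable def muW {N : ℕ} (lam : Fin N → ℝ) (p : Fin N → ℤ) : ℝ := ∑ n, (p n : ℝ) * lam n

noncomputable def Cc {N : ℕ} (α : Fin N → ℝ) (L : ℕ) (q : Option (Fin N) × (Fin N → ℤ)) : ℂ :=
  (Option.elim q.1 1 fun m => Complex.exp (-(2 * π * Complex.I * (α m : ℂ)))) * A α L q.2

noncomputable def nu {N : ℕ} (lam : Fin N → ℝ) (q : Option (Fin N) × (Fin N → ℤ)) : ℝ :=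
  Option.elim q.1 0 lam + muW lam q.2

theorem bohr_jessen_mean_values (N : ℕ) (lam : Fin N → ℝ)
    (hind : LinearIndependent ℚ lam) (α : Fin N → ℝ)
    (L : ℕ) (hL : 1 ≤ L)
    (K : ℝ → ℂ)
    (hK : ∀ y : ℝ, K y = ∑ l ∈ Finset.Icc (-(L : ℤ)) (L : ℤ),
        ((1 - |(l : ℝ)| / L : ℝ) : ℂ) * Complex.exp (2 * π * Complex.I * l * y))
    (F W : ℝ → ℂ)
    (hF : ∀ x : ℝ, F x = 1 + ∑ n : Fin N,
        Complex.exp (-(2 * π * Complex.I * α n)) * Complex.exp (2 * π * Complex.I * lam n * x))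
    (hW : ∀ x : ℝ, W x = ∏ n : Fin N, K (x * lam n - α n)) :
    Tendsto (fun T : ℝ => (1 / (2 * T)) * ∫ x in (-T)..T, F x * W x) atTop
        (nhds ((1 : ℂ) + N * (L - 1) / L)) ∧
    Tendsto (fun T : ℝ => (1 / (2 * T)) * ∫ x in (-T)..T, W x) atTop (nhds (1 : ℂ)) := by
  have hLR : (L : ℝ) ≠ 0 := Nat.cast_ne_zero.mpr (by omega)
  set P : Finset (Fin N → ℤ) := Fintype.piFinset fun _ : Fin N => Finset.Icc (-(L : ℤ)) (L : ℤ)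
    with hP
  -- W as a canonical trig sum
  have hWx : ∀ x : ℝ, W x = ∑ p ∈ P, A α L p * e (muW lam p) x := by
    intro x
    rw [hW]
    simp only [hK]
    rw [Finset.prod_univ_sum]
    refine Finset.sum_congr rfl fun p _ => ?_
    rw [Finset.prod_mul_distrib, ← Complex.exp_sum]
    simp only [A, e, muW]
    conv_rhs => rw [mul_assoc, ← Complex.exp_add]
    refine congrArg₂ _ rfl (congrArg _ ?_)
    push_cast
    simp only [Finset.mul_sum, Finset.sum_mul, ← Finset.sum_neg_distrib, ← Finset.sum_add_distrib]
    exact Finset.sum_congr rfl fun n _ => by ring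
  -- linear independence: integer relations are trivial
  have hzero : ∀ p : Fin N → ℤ, muW lam p = 0 → p = 0 := by
    intro p hp
    have hq : ∑ n ∈ Finset.univ, ((p n : ℚ)) • lam n = 0 := by
      have : ∀ n : Fin N, ((p n : ℚ)) • lam n = (p n : ℝ) * lam n := fun n => by
        rw [Rat.smul_def]; norm_num
      rw [Finset.sum_congr rfl fun n _ => this n]
      exact hp
    have h := linearIndependent_iff'.mp hind Finset.univ (fun n => (p n : ℚ)) hq
    funext n
    have h3 : p n = 0 := by
      have h2 := h n (Finset.mem_univ n)
      exact_mod_cast h2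
    simp [h3]
  -- evaluation of the zero-frequency sum for W
  have hmem0 : (0 : Fin N → ℤ) ∈ P := by
    rw [hP, Fintype.mem_piFinset]
    intro n
    simp only [Pi.zero_apply, Finset.mem_Icc]
    omega
  have hsumW : (∑ p ∈ P, if muW lam p = 0 then A α L p else 0) = 1 := by
    rw [Finset.sum_eq_single_of_mem 0 hmem0 ?_]
    · rw [if_pos (by simp [muW])]
      simp [A]
    · intro b _ hb
      rw [if_neg]
      intro hmu
      exact hb (hzero b hmu)
  -- second limit
  have part2 : Tendsto (fun T : ℝ => (1 / (2 * T)) * ∫ x in (-T)..T, W x) atTop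
      (nhds (1 : ℂ)) := by
    have hm := mean_sum P (A α L) (muW lam)
    rw [hsumW] at hm
    refine hm.congr fun T => ?_
    congr 1
    exact intervalIntegral.integral_congr fun x _ => (hWx x).symm
  refine ⟨?_, part2⟩
  -- F * W as a canonical trig sum
  have hFWx : ∀ x : ℝ, F x * W x
      = ∑ q ∈ Finset.univ ×ˢ P, Cc α L q * e (nu lam q) x := by
    intro x
    rw [hF, hWx x, Finset.sum_product, Fintype.sum_option, add_mul, one_mul, Finset.sum_mul]
    congr 1
    · refine Finset.sum_congr rfl fun p _ => ?_
      simp only [Cc, nu, Option.elim, one_mul, zero_add]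
    · refine Finset.sum_congr rfl fun m _ => ?_
      rw [Finset.mul_sum]
      refine Finset.sum_congr rfl fun p _ => ?_
      simp only [Cc, nu, Option.elim]
      rw [show Complex.exp (-(2 * π * Complex.I * α m)) * Complex.exp (2 * π * Complex.I * lam m * x)
        = Complex.exp (-(2 * π * Complex.I * (α m : ℂ))) * e (lam m) x from rfl]
      rw [mul_mul_mul_comm, e_add]
  -- evaluate the conditional sum for F * W
  have hval : (∑ q ∈ Finset.univ ×ˢ P, if nu lam q = 0 then Cc α L q else 0)
      = (1 : ℂ) + N * ((L : ℂ) - 1) / L := by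
    rw [Finset.sum_product, Fintype.sum_option]
    have hnone : (∑ p ∈ P, if nu lam (none, p) = 0 then Cc α L (none, p) else 0) = 1 := by
      simp only [nu, Cc, Option.elim, zero_add, one_mul]
      exact hsumW
    rw [hnone]
    congr 1
    have hsome : ∀ m : Fin N,
        (∑ p ∈ P, if nu lam (some m, p) = 0 then Cc α L (some m, p) else 0)
          = ((L : ℂ) - 1) / L := by
      intro m
      simp only [nu, Cc, Option.elim]
      set pm : Fin N → ℤ := fun n => if n = m then -1 else 0 with hpm
      have hpmem : pm ∈ P := by
        rw [hP, Fintype.mem_piFinset]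
        intro n
        simp only [hpm, Finset.mem_Icc]
        split <;> omega
      have hmupm : muW lam pm = -lam m := by
        rw [muW]
        have : ∀ n : Fin N, ((pm n : ℝ)) * lam n = if n = m then -lam n else 0 := by
          intro n
          simp only [hpm]
          split <;> simp
        rw [Finset.sum_congr rfl fun n _ => this n]
        simp
      rw [Finset.sum_eq_single_of_mem pm hpmem ?_]
      · refine (if_pos (show lam m + muW lam pm = 0 by rw [hmupm]; ring)).trans ?_
        have hprod : (∏ n, ((1 - |(pm n : ℝ)| / L : ℝ) : ℂ)) = ((1 - 1 / L : ℝ) : ℂ) := by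
          rw [Finset.prod_eq_single m ?_ (by simp)]
          · simp [hpm]
          · intro n _ hn
            simp [hpm, hn]
        have hsum : (∑ n, (pm n : ℝ) * α n) = -α m := by
          have : ∀ n : Fin N, ((pm n : ℝ)) * α n = if n = m then -α n else 0 := by
            intro n
            simp only [hpm]
            split <;> simp
          rw [Finset.sum_congr rfl fun n _ => this n]
          simp
        rw [A, hprod, hsum]
        rw [show (Complex.exp (-(2 * π * Complex.I * ((-α m : ℝ) : ℂ)))) =
          Complex.exp (2 * π * Complex.I * (α m : ℂ)) by push_cast; ring_nf]
        rw [show Complex.exp (-(2 * π * Complex.I * (α m : ℂ))) *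
            (((1 - 1 / L : ℝ) : ℂ) * Complex.exp (2 * π * Complex.I * (α m : ℂ)))
          = ((1 - 1 / L : ℝ) : ℂ) *
            (Complex.exp (-(2 * π * Complex.I * (α m : ℂ)) + 2 * π * Complex.I * (α m : ℂ))) by
            rw [Complex.exp_add]; ring]
        rw [neg_add_cancel, Complex.exp_zero, mul_one]
        have hLC : (L : ℂ) ≠ 0 := Nat.cast_ne_zero.mpr (by omega)
        push_cast
        field_simp
      · intro b hbP hb
        refine if_neg ?_
        intro hmu
        apply hb
        have hq : muW lam (fun n => b n + (if n = m then 1 else 0)) = 0 := by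
          rw [muW]
          have : ∀ n : Fin N, (((b n + (if n = m then 1 else 0) : ℤ) : ℝ)) * lam n
              = (b n : ℝ) * lam n + (if n = m then lam n else 0) := by
            intro n
            split <;> push_cast <;> ring
          rw [Finset.sum_congr rfl fun n _ => this n, Finset.sum_add_distrib]
          simp only [Finset.sum_ite_eq' Finset.univ m, Finset.mem_univ, if_pos]
          rw [show (∑ n, (b n : ℝ) * lam n) = muW lam b from rfl]
          linarith [hmu]
        have := hzero _ hq
        funext n
        have hn : b n + (if n = m then 1 else 0) = 0 := by
          have := congrFun this n
          simpa using this
        show b n = if n = m then -1 else 0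
        split at hn <;> simp_all <;> omega
    rw [Finset.sum_congr rfl fun m _ => hsome m]
    rw [Finset.sum_const, Finset.card_univ, Fintype.card_fin, nsmul_eq_mul]
    ring
  have hm := mean_sum (Finset.univ ×ˢ P) (Cc α L) (nu lam)
  rw [hval] at hm
  refine hm.congr fun T => ?_
  congr 1
  exact intervalIntegral.integral_congr fun x _ => (hFWx x).symm
end
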